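/- The maps s_x : ℝ² → ℝ² defined by s_{(a,b)}(a',b') = (2a − a', 2cos(a − a')·b − b') satisfy the symmetric space axioms: each s_x is an involution, x is an isolated fixed point of s_x, and s_x ∘ s_y = s_{s_x(y)} ∘ s_x for all x, y. -/
import Mathlib

/-- The symmetry of the non-exponential solvable symmetric space `ℝ²`:
`s_{(a,b)}(a',b') = (2a − a', 2cos(a − a')·b − b')`. -/
noncomputable def symCos (z p : ℝ × ℝ) : ℝ × ℝ :=
  (2 * z.1 - p.1, 2 * Real.cos (z.1 - p.1) * z.2 - p.2)

/-- The maps `s_{(a,b)}(a',b') = (2a − a', 2cos(a − a')·b − b')` make `ℝ²` a symmetric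
space: each `s_x` is an involution, `x` is an isolated fixed point of `s_x`, and
`s_x(s_y z) = s_{s_x y}(s_x z)`. -/
theorem cos_space_is_symmetric_space :
    (∀ x y : ℝ × ℝ, symCos x (symCos x y) = y) ∧
    (∀ x : ℝ × ℝ, symCos x x = x) ∧
    (∀ x : ℝ × ℝ, ∃ U ∈ nhds x, ∀ y ∈ U, symCos x y = y → y = x) ∧
    (∀ x y z : ℝ × ℝ, symCos x (symCos y z) = symCos (symCos x y) (symCos x z)) := by
  refine ⟨?_, ?_, ?_, ?_⟩
  · intro x y
    have h : x.1 - (2 * x.1 - y.1) = -(x.1 - y.1) := by ring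
    simp [symCos, h, Real.cos_neg, Real.cos_sub, Prod.ext_iff]
    ring
  · intro x
    simp [symCos, Prod.ext_iff]
    constructor <;> ring
  · intro x
    refine ⟨Set.univ, Filter.univ_mem, fun y _ hfix => ?_⟩
    have h1 : 2 * x.1 - y.1 = y.1 := congrArg Prod.fst hfix
    have hx1 : x.1 = y.1 := by linarith
    have h2 : 2 * Real.cos (x.1 - y.1) * x.2 - y.2 = y.2 := congrArg Prod.snd hfix
    rw [hx1, sub_self, Real.cos_zero] at h2
    have hx2 : x.2 = y.2 := by linarith
    exact Prod.ext hx1.symm hx2.symm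
  · intro x y z
    have h1 : x.1 - (2 * y.1 - z.1) = (x.1 - y.1) - (y.1 - z.1) := by ring
    have h2 : (2 * x.1 - y.1) - (2 * x.1 - z.1) = -((y.1 - z.1)) := by ring
    simp [symCos, h1, h2, Real.cos_neg, Real.cos_sub, Real.sin_sub, Prod.ext_iff]
    constructor
    · ring
    · linear_combination (-2 * x.2 * (Real.cos x.1 * Real.cos z.1 + Real.sin x.1 * Real.sin z.1)) *
        Real.sin_sq_add_cos_sq y.1
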